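/- Fix an integer t ≥ 0 and assume f is convex on 𝓑. Suppose v : Ω → 𝓑 is a random vector independent of ℋ_t whose mean γ̄ = E[v] satisfies ⟨a_i, γ̄⟩ ≤ b_i for all i ∈ {1,…,N}, and suppose that almost surely V⟨∇f(γ_{t−1}), x_t⟩ + ⟨Q(t), A x_t⟩ ≤ V⟨∇f(γ_{t−1}), v⟩ + ⟨Q(t), A v⟩. Then E[ V⟨∇f(γ_{t−1}), x_t − γ_{t−1}⟩ ] + E[ ⟨Q(t), A x_t − b⟩ ] ≤ V ( f(γ̄) − E[f(γ_{t−1})] ). -/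

import Mathlib

open MeasureTheory ProbabilityTheory Topology

theorem grad_convex_ineq {E : Type*} [NormedAddCommGroup E] [InnerProductSpace ℝ E] [CompleteSpace E]
    {s : Set E} {f : E → ℝ} {g z y : E}
    (hf : ConvexOn ℝ s f) (hz : z ∈ s) (hy : y ∈ s)
    (hg : HasGradientAt f g z) : (inner ℝ g (y - z) : ℝ) ≤ f y - f z := by
  set φ : ℝ → ℝ := fun s => f (z + s • (y - z)) with hφ
  have hline : HasDerivAt φ (inner ℝ g (y - z) : ℝ) 0 := by
    have h1 : HasDerivAt (fun s : ℝ => z + s • (y - z)) (y - z) 0 := by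
      simpa using ((hasDerivAt_id (0:ℝ)).smul_const (y - z)).const_add z
    have hF : HasFDerivAt f ((InnerProductSpace.toDual ℝ E) g) (z + (0:ℝ) • (y - z)) := by
      simpa using hg.hasFDerivAt
    have h2 := hF.comp_hasDerivAt 0 h1
    simp at h2; exact h2
  have key : ∀ᶠ u in 𝓝[>] (0:ℝ), slope φ 0 u ≤ f y - f z := by
    filter_upwards [Ioo_mem_nhdsGT_of_mem (by norm_num : (0:ℝ) ∈ Set.Ico 0 1)] with u hu
    have hcvx := hf.2 hz hy (by linarith [hu.2] : (0:ℝ) ≤ 1 - u) (le_of_lt hu.1) (by ring)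
    have heq : z + u • (y - z) = (1 - u) • z + u • y := by module
    rw [slope_def_field]
    have hφu : φ u = f ((1 - u) • z + u • y) := by simp only [hφ]; rw [heq]
    have hφ0 : φ 0 = f z := by simp [hφ]
    rw [hφu, hφ0, div_le_iff₀ (by simpa using hu.1)]
    simp only [smul_eq_mul] at hcvx
    nlinarith [hcvx]
  have htend : Filter.Tendsto (slope φ 0) (𝓝[>] 0) (𝓝 (inner ℝ g (y - z) : ℝ)) := by
    have h := (hline.hasDerivWithinAt (s := Set.Ioi 0))
    rw [hasDerivWithinAt_iff_tendsto_slope] at h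
    exact h.mono_left (nhdsWithin_mono _ (fun u hu => ⟨hu, ne_of_gt hu⟩))
  exact le_of_tendsto htend key

theorem coord_abs_le_norm {n : ℕ} (z : EuclideanSpace ℝ (Fin n)) (j : Fin n) : |z j| ≤ ‖z‖ := by
  rw [EuclideanSpace.norm_eq, ← Real.sqrt_sq_eq_abs]
  apply Real.sqrt_le_sqrt
  have : (z j)^2 = ‖z j‖^2 := by rw [Real.norm_eq_abs, sq_abs]
  rw [this]
  exact Finset.single_le_sum (f := fun i => ‖z i‖^2) (fun i _ => sq_nonneg _) (Finset.mem_univ j)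

theorem stmt1
    {d N : ℕ}
    {Ω : Type*} {m0 : MeasurableSpace Ω} (μ : Measure Ω) [IsProbabilityMeasure μ]
    (ℋ : Filtration ℕ m0)
    (Bset : Set (EuclideanSpace ℝ (Fin d))) (D : ℝ)
    (hBconv : Convex ℝ Bset) (hBcpt : IsCompact Bset)
    (hB0 : (0 : EuclideanSpace ℝ (Fin d)) ∈ Bset)
    (hBD : ∀ z ∈ Bset, ∀ w ∈ Bset, ‖z - w‖ ≤ D)
    (f : EuclideanSpace ℝ (Fin d) → ℝ) (f' : EuclideanSpace ℝ (Fin d) → EuclideanSpace ℝ (Fin d)) (L M K : ℝ)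
    (hgrad : ∀ z, HasGradientAt f (f' z) z)
    (hLip : ∀ z ∈ Bset, ∀ w ∈ Bset, ‖f' z - f' w‖ ≤ L * ‖z - w‖)
    (hM : ∀ z ∈ Bset, ‖f' z‖ ≤ M)
    (hK : ∀ z ∈ Bset, |f z| ≤ K)
    (a : Fin N → EuclideanSpace ℝ (Fin d)) (b : Fin N → ℝ)
    (x : ℕ → Ω → EuclideanSpace ℝ (Fin d))
    (hxB : ∀ t ω, x t ω ∈ Bset)
    (hxmeas : ∀ t, Measurable[ℋ (t + 1)] (x t))
    (η V : ℝ) (hη0 : 0 < η) (hη1 : η < 1) (hV : 0 < V)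
    (Q : ℕ → Ω → EuclideanSpace ℝ (Fin N))
    (hQ0 : ∀ ω, Q 0 ω = 0)
    (hQrec : ∀ t ω i, Q (t + 1) ω i = max (Q t ω i + (inner ℝ (a i) (x t ω) : ℝ) - b i) 0)
    (γ : ℕ → Ω → EuclideanSpace ℝ (Fin d))
    (hγ0 : ∀ ω, γ 0 ω = 0)
    (hγrec : ∀ t ω, γ (t + 1) ω = (1 - η) • γ t ω + η • x t ω)
    (hconv : ConvexOn ℝ Bset f)
    (t : ℕ)
    (v : Ω → EuclideanSpace ℝ (Fin d)) (hvB : ∀ ω, v ω ∈ Bset)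
    (hvmeas : Measurable v) (hvint : Integrable v μ)
    (hvindep : Indep (MeasurableSpace.comap v inferInstance) (ℋ t) μ)
    (γbar : EuclideanSpace ℝ (Fin d)) (hγbar : γbar = ∫ ω, v ω ∂μ)
    (hγbarfeas : ∀ i, (inner ℝ (a i) γbar : ℝ) ≤ b i)
    (hopt : ∀ᵐ ω ∂μ,
      V * (inner ℝ (f' (γ t ω)) (x t ω) : ℝ) + ∑ i, Q t ω i * (inner ℝ (a i) (x t ω) : ℝ)
        ≤ V * (inner ℝ (f' (γ t ω)) (v ω) : ℝ) + ∑ i, Q t ω i * (inner ℝ (a i) (v ω) : ℝ)) :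
    (∫ ω, V * (inner ℝ (f' (γ t ω)) (x t ω - γ t ω) : ℝ) ∂μ)
      + (∫ ω, ∑ i, Q t ω i * ((inner ℝ (a i) (x t ω) : ℝ) - b i) ∂μ)
      ≤ V * (f γbar - ∫ ω, f (γ t ω) ∂μ) := by
  -- basic facts
  obtain ⟨R, hR⟩ := isBounded_iff_forall_norm_le.mp hBcpt.isBounded
  have hR0 : 0 ≤ R := le_trans (norm_nonneg _) (hR 0 hB0)
  have hM0 : 0 ≤ M := le_trans (norm_nonneg _) (hM 0 hB0)
  -- measurability of γ
  have hγmeas : ∀ s, Measurable[ℋ s] (γ s) := by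
    intro s
    induction s with
    | zero =>
      have : γ 0 = fun _ => (0 : EuclideanSpace ℝ (Fin d)) := funext hγ0
      rw [this]; exact measurable_const
    | succ n ih =>
      have : γ (n+1) = fun ω => (1 - η) • γ n ω + η • x n ω := funext (hγrec n)
      rw [this]
      exact ((ih.mono (ℋ.mono n.le_succ) le_rfl).const_smul (1 - η)).add ((hxmeas n).const_smul η)
  have hγB : ∀ s ω, γ s ω ∈ Bset := by
    intro s
    induction s with
    | zero => intro ω; rw [hγ0]; exact hB0
    | succ n ih =>
      intro ω; rw [hγrec n ω]
      exact hBconv (ih ω) (hxB n ω) (by linarith) (le_of_lt hη0) (by ring)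
  -- measurability and bounds of Q coordinates
  have hQmeas : ∀ s i, Measurable[ℋ s] (fun ω => Q s ω i) := by
    intro s
    induction s with
    | zero =>
      intro i
      have : (fun ω => Q 0 ω i) = fun _ => (0:ℝ) := funext fun ω => by rw [hQ0]; rfl
      rw [this]; exact measurable_const
    | succ n ih =>
      intro i
      have : (fun ω => Q (n+1) ω i)
          = fun ω => max (Q n ω i + (inner ℝ (a i) (x n ω) : ℝ) - b i) 0 := funext fun ω => hQrec n ω i
      rw [this]
      have h1 : Measurable[ℋ (n+1)] (fun ω => (inner ℝ (a i) (x n ω) : ℝ)) :=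
        (Continuous.measurable (continuous_const.inner continuous_id)).comp (hxmeas n)
      exact (((ih i).mono (ℋ.mono n.le_succ) le_rfl).add h1 |>.sub measurable_const).max measurable_const
  have hQnonneg : ∀ s ω i, 0 ≤ Q s ω i := by
    intro s
    induction s with
    | zero => intro ω i; rw [hQ0]; exact le_refl _
    | succ n ih => intro ω i; rw [hQrec]; exact le_max_right _ _
  have hQbdd : ∀ s i, ∃ C, ∀ ω, |Q s ω i| ≤ C := by
    intro s i
    induction s with
    | zero => exact ⟨0, fun ω => by rw [hQ0]; simp⟩
    | succ n ih =>
      obtain ⟨C, hC⟩ := ih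
      refine ⟨max (C + ‖a i‖ * R + |b i|) 0, fun ω => ?_⟩
      rw [hQrec]
      rw [abs_of_nonneg (le_max_right _ _)]
      apply max_le_max _ le_rfl
      have h1 : (inner ℝ (a i) (x n ω) : ℝ) ≤ ‖a i‖ * R := by
        calc (inner ℝ (a i) (x n ω) : ℝ) ≤ ‖a i‖ * ‖x n ω‖ := real_inner_le_norm _ _
        _ ≤ ‖a i‖ * R := by
          exact mul_le_mul_of_nonneg_left (hR _ (hxB n ω)) (norm_nonneg _)
      have h2 := (abs_le.mp (hC ω)).2
      have h3 := neg_abs_le (b i)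
      linarith
  -- integrability helper
  have hbint : ∀ (g : Ω → ℝ), Measurable g → (∃ C, ∀ ω, |g ω| ≤ C) → Integrable g μ := by
    rintro g hg ⟨C, hC⟩
    exact Integrable.mono' (integrable_const C) hg.aestronglyMeasurable
      (Filter.Eventually.of_forall fun ω => by simpa using hC ω)
  -- W and its measurability
  set W : Ω → EuclideanSpace ℝ (Fin d) := fun ω => f' (γ t ω) with hW
  have hf'cont : ContinuousOn f' Bset := by
    intro z hz
    apply ContinuousWithinAt.mono ?_ (le_refl Bset)
    rw [Metric.continuousWithinAt_iff]
    intro ε hε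
    rcases le_or_gt L 0 with hL | hL
    · refine ⟨1, one_pos, fun {w} hw _ => ?_⟩
      have := hLip w hw z hz
      have : ‖f' w - f' z‖ ≤ 0 := le_trans this (mul_nonpos_of_nonpos_of_nonneg hL (norm_nonneg _))
      have : f' w = f' z := by
        rw [← sub_eq_zero]; exact norm_le_zero_iff.mp this
      simpa [dist_eq_norm, this] using hε
    · refine ⟨ε / L, div_pos hε hL, fun {w} hw hd => ?_⟩
      have := hLip w hw z hz
      rw [dist_eq_norm] at *
      calc ‖f' w - f' z‖ ≤ L * ‖w - z‖ := this
        _ < L * (ε / L) := by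
          apply mul_lt_mul_of_pos_left hd hL
        _ = ε := by field_simp
  have hWmeasH : Measurable[ℋ t] W := by
    have hsub : Measurable[ℋ t] (fun ω => (⟨γ t ω, hγB t ω⟩ : Bset)) :=
      (hγmeas t).subtype_mk
    have hgc : Continuous (fun z : Bset => f' z) :=
      continuousOn_iff_continuous_restrict.mp hf'cont
    exact hgc.measurable.comp hsub
  have hWmeas : Measurable W := hWmeasH.mono (ℋ.le t) le_rfl
  have hWbdd : ∀ ω, ‖W ω‖ ≤ M := fun ω => hM _ (hγB t ω)
  have hγtm : Measurable (γ t) := (hγmeas t).mono (ℋ.le t) le_rfl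
  have hxm : Measurable (x t) := (hxmeas t).mono (ℋ.le (t+1)) le_rfl
  have hQim : ∀ i, Measurable (fun ω => Q t ω i) := fun i => (hQmeas t i).mono (ℋ.le t) le_rfl
  have hfcont : Continuous f :=
    continuous_iff_continuousAt.mpr fun z => (hgrad z).hasFDerivAt.continuousAt
  -- γbar in Bset
  have hγbarB : γbar ∈ Bset := by
    rw [hγbar]
    exact hBconv.integral_mem hBcpt.isClosed (Filter.Eventually.of_forall hvB) hvint
  -- expectation of CLM applied to v
  have hEL : ∀ (T : EuclideanSpace ℝ (Fin d) →L[ℝ] ℝ), ∫ ω, T (v ω) ∂μ = T γbar := by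
    intro T
    rw [hγbar]
    exact T.integral_comp_comm hvint
  -- independence
  have hindep_pair : ∀ (g : Ω → ℝ) (h : EuclideanSpace ℝ (Fin d) → ℝ),
      Measurable[ℋ t] g → Measurable h → IndepFun g (fun ω => h (v ω)) μ := by
    intro g h hg hh
    have h1 : MeasurableSpace.comap g inferInstance ≤ ℋ t := hg.comap_le
    have h2 : MeasurableSpace.comap (fun ω => h (v ω)) inferInstance
        ≤ MeasurableSpace.comap v inferInstance := by
      have : (fun ω => h (v ω)) = h ∘ v := rfl
      rw [this, ← MeasurableSpace.comap_comp]
      exact MeasurableSpace.comap_mono hh.comap_le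
    exact indep_of_indep_of_le_left (indep_of_indep_of_le_right hvindep.symm h2) h1
  -- coordinate tools
  have hprojc : ∀ j : Fin d, Continuous (fun z : EuclideanSpace ℝ (Fin d) => z j) :=
    fun j => (EuclideanSpace.proj (𝕜 := ℝ) j).continuous
  have hWj_measH : ∀ j, Measurable[ℋ t] (fun ω => W ω j) :=
    fun j => ((hprojc j).measurable).comp hWmeasH
  have hWj_meas : ∀ j, Measurable (fun ω => W ω j) :=
    fun j => (hWj_measH j).mono (ℋ.le t) le_rfl
  have hWj_bdd : ∀ (j : Fin d) ω, |W ω j| ≤ M :=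
    fun j ω => le_trans (coord_abs_le_norm _ _) (hWbdd ω)
  have hvj_bdd : ∀ (j : Fin d) ω, |v ω j| ≤ R :=
    fun j ω => le_trans (coord_abs_le_norm _ _) (hR _ (hvB ω))
  have hvj_meas : ∀ j, Measurable (fun ω => v ω j) := fun j => ((hprojc j).measurable).comp hvmeas
  have hWj_int : ∀ j, Integrable (fun ω => W ω j) μ :=
    fun j => hbint _ (hWj_meas j) ⟨M, hWj_bdd j⟩
  have hvj_int : ∀ j, Integrable (fun ω => v ω j) μ :=
    fun j => hbint _ (hvj_meas j) ⟨R, hvj_bdd j⟩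
  have hWvj_int : ∀ j, Integrable (fun ω => W ω j * v ω j) μ := by
    intro j
    refine hbint _ ((hWj_meas j).mul (hvj_meas j)) ⟨M * R, fun ω => ?_⟩
    rw [abs_mul]
    exact mul_le_mul (hWj_bdd j ω) (hvj_bdd j ω) (abs_nonneg _) hM0
  -- inner products expand as sums
  have hinner_sum : ∀ (z w : EuclideanSpace ℝ (Fin d)), (inner ℝ z w : ℝ) = ∑ j, z j * w j := by
    intro z w
    simp [PiLp.inner_apply, RCLike.inner_apply, mul_comm]
  -- key independence identity
  have hEinner : ∫ ω, (inner ℝ (W ω) (v ω) : ℝ) ∂μ = ∫ ω, (inner ℝ (W ω) γbar : ℝ) ∂μ := by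
    simp only [hinner_sum]
    rw [integral_finset_sum _ (fun j _ => hWvj_int j),
      integral_finset_sum _ (fun j _ => (hWj_int j).mul_const _)]
    refine Finset.sum_congr rfl fun j _ => ?_
    have hind : IndepFun (fun ω => W ω j) (fun ω => v ω j) μ :=
      hindep_pair _ (fun z => z j) (hWj_measH j) (hprojc j).measurable
    have hfeq : (fun ω => W ω j * v ω j) = (fun ω => W ω j) * fun ω => v ω j := rfl
    rw [hfeq, hind.integral_mul_eq_mul_integral (hWj_int j).aestronglyMeasurable (hvj_int j).aestronglyMeasurable, integral_mul_const]
    congr 1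
    exact hEL (EuclideanSpace.proj j)
  -- per-coordinate Q integrability
  have hQi_int : ∀ i, Integrable (fun ω => Q t ω i) μ :=
    fun i => hbint _ (hQim i) (hQbdd t i)
  have hinner_av_meas : ∀ i, Measurable (fun ω => (inner ℝ (a i) (v ω) : ℝ)) :=
    fun i => (Continuous.measurable (continuous_const.inner continuous_id)).comp hvmeas
  have hinner_ax_meas : ∀ i, Measurable (fun ω => (inner ℝ (a i) (x t ω) : ℝ)) :=
    fun i => (Continuous.measurable (continuous_const.inner continuous_id)).comp hxm
  have hinner_av_bdd : ∀ i ω, |(inner ℝ (a i) (v ω) : ℝ)| ≤ ‖a i‖ * R := by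
    intro i ω
    calc |(inner ℝ (a i) (v ω) : ℝ)| ≤ ‖a i‖ * ‖v ω‖ := abs_real_inner_le_norm _ _
      _ ≤ ‖a i‖ * R := mul_le_mul_of_nonneg_left (hR _ (hvB ω)) (norm_nonneg _)
  have hinner_ax_bdd : ∀ i ω, |(inner ℝ (a i) (x t ω) : ℝ)| ≤ ‖a i‖ * R := by
    intro i ω
    calc |(inner ℝ (a i) (x t ω) : ℝ)| ≤ ‖a i‖ * ‖x t ω‖ := abs_real_inner_le_norm _ _
      _ ≤ ‖a i‖ * R := mul_le_mul_of_nonneg_left (hR _ (hxB t ω)) (norm_nonneg _)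
  have hQv_int : ∀ i, Integrable (fun ω => Q t ω i * ((inner ℝ (a i) (v ω) : ℝ) - b i)) μ := by
    intro i
    obtain ⟨C, hC⟩ := hQbdd t i
    refine hbint _ ((hQim i).mul ((hinner_av_meas i).sub measurable_const)) ⟨C * (‖a i‖ * R + |b i|), fun ω => ?_⟩
    rw [abs_mul]
    refine mul_le_mul (hC ω) ?_ (abs_nonneg _) (le_trans (abs_nonneg _) (hC ω))
    calc |(inner ℝ (a i) (v ω) : ℝ) - b i| ≤ |(inner ℝ (a i) (v ω) : ℝ)| + |b i| := abs_sub _ _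
      _ ≤ ‖a i‖ * R + |b i| := add_le_add_left (hinner_av_bdd i ω) _
  have hQx_int : ∀ i, Integrable (fun ω => Q t ω i * ((inner ℝ (a i) (x t ω) : ℝ) - b i)) μ := by
    intro i
    obtain ⟨C, hC⟩ := hQbdd t i
    refine hbint _ ((hQim i).mul ((hinner_ax_meas i).sub measurable_const)) ⟨C * (‖a i‖ * R + |b i|), fun ω => ?_⟩
    rw [abs_mul]
    refine mul_le_mul (hC ω) ?_ (abs_nonneg _) (le_trans (abs_nonneg _) (hC ω))
    calc |(inner ℝ (a i) (x t ω) : ℝ) - b i| ≤ |(inner ℝ (a i) (x t ω) : ℝ)| + |b i| := abs_sub _ _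
      _ ≤ ‖a i‖ * R + |b i| := add_le_add_left (hinner_ax_bdd i ω) _
  -- the Q-v term is nonpositive
  have hG2 : ∫ ω, ∑ i, Q t ω i * ((inner ℝ (a i) (v ω) : ℝ) - b i) ∂μ ≤ 0 := by
    rw [integral_finset_sum _ (fun i _ => hQv_int i)]
    apply Finset.sum_nonpos
    intro i _
    have hexp : ∀ ω, Q t ω i * ((inner ℝ (a i) (v ω) : ℝ) - b i)
        = Q t ω i * (inner ℝ (a i) (v ω) : ℝ) - Q t ω i * b i := fun ω => by ring
    have hQav_int : Integrable (fun ω => Q t ω i * (inner ℝ (a i) (v ω) : ℝ)) μ := by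
      obtain ⟨C, hC⟩ := hQbdd t i
      refine hbint _ ((hQim i).mul (hinner_av_meas i)) ⟨C * (‖a i‖ * R), fun ω => ?_⟩
      rw [abs_mul]
      exact mul_le_mul (hC ω) (hinner_av_bdd i ω) (abs_nonneg _) (le_trans (abs_nonneg _) (hC ω))
    simp only [hexp]
    rw [integral_sub hQav_int ((hQi_int i).mul_const _)]
    have hind : IndepFun (fun ω => Q t ω i) (fun ω => (inner ℝ (a i) (v ω) : ℝ)) μ :=
      hindep_pair _ (fun z => (inner ℝ (a i) z : ℝ)) (hQmeas t i)
        (Continuous.measurable (continuous_const.inner continuous_id))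
    have hav_int : Integrable (fun ω => (inner ℝ (a i) (v ω) : ℝ)) μ :=
      hbint _ (hinner_av_meas i) ⟨‖a i‖ * R, hinner_av_bdd i⟩
    have hfeq : (fun ω => Q t ω i * (inner ℝ (a i) (v ω) : ℝ))
        = (fun ω => Q t ω i) * fun ω => (inner ℝ (a i) (v ω) : ℝ) := rfl
    rw [hfeq, hind.integral_mul_eq_mul_integral (hQi_int i).aestronglyMeasurable hav_int.aestronglyMeasurable, integral_mul_const]
    have hEav : ∫ ω, (inner ℝ (a i) (v ω) : ℝ) ∂μ = (inner ℝ (a i) γbar : ℝ) := by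
      have := hEL (innerSL ℝ (a i))
      simpa using this
    rw [hEav]
    have hIQ : 0 ≤ ∫ ω, Q t ω i ∂μ := integral_nonneg fun ω => hQnonneg t ω i
    nlinarith [hγbarfeas i, hIQ]
  -- integrability of the main integrands
  have hWinner_int : ∀ (u : Ω → EuclideanSpace ℝ (Fin d)), Measurable u → (∀ ω, ‖u ω‖ ≤ R) →
      Integrable (fun ω => (inner ℝ (W ω) (u ω) : ℝ)) μ := by
    intro u hu hub
    refine hbint _ (hWmeas.inner hu) ⟨M * R, fun ω => ?_⟩
    calc |(inner ℝ (W ω) (u ω) : ℝ)| ≤ ‖W ω‖ * ‖u ω‖ := abs_real_inner_le_norm _ _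
      _ ≤ M * R := mul_le_mul (hWbdd ω) (hub ω) (norm_nonneg _) hM0
  have hγtbdd : ∀ ω, ‖γ t ω‖ ≤ R := fun ω => hR _ (hγB t ω)
  have hWx_int : Integrable (fun ω => (inner ℝ (W ω) (x t ω) : ℝ)) μ :=
    hWinner_int _ hxm (fun ω => hR _ (hxB t ω))
  have hWγ_int : Integrable (fun ω => (inner ℝ (W ω) (γ t ω) : ℝ)) μ :=
    hWinner_int _ hγtm hγtbdd
  have hWv_int : Integrable (fun ω => (inner ℝ (W ω) (v ω) : ℝ)) μ :=
    hWinner_int _ hvmeas (fun ω => hR _ (hvB ω))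
  have hWγbar_int : Integrable (fun ω => (inner ℝ (W ω) γbar : ℝ)) μ := by
    refine hbint _ (hWmeas.inner measurable_const) ⟨M * R, fun ω => ?_⟩
    calc |(inner ℝ (W ω) γbar : ℝ)| ≤ ‖W ω‖ * ‖γbar‖ := abs_real_inner_le_norm _ _
      _ ≤ M * R := mul_le_mul (hWbdd ω) (hR _ hγbarB) (norm_nonneg _) hM0
  have hF1_int : Integrable (fun ω => V * (inner ℝ (W ω) (x t ω - γ t ω) : ℝ)) μ := by
    have : ∀ ω, V * (inner ℝ (W ω) (x t ω - γ t ω) : ℝ)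
        = V * (inner ℝ (W ω) (x t ω) : ℝ) - V * (inner ℝ (W ω) (γ t ω) : ℝ) := by
      intro ω; rw [inner_sub_right]; ring
    simp only [this]
    exact ((hWx_int.const_mul V).sub (hWγ_int.const_mul V))
  have hG1_int : Integrable (fun ω => V * (inner ℝ (W ω) (v ω - γ t ω) : ℝ)) μ := by
    have : ∀ ω, V * (inner ℝ (W ω) (v ω - γ t ω) : ℝ)
        = V * (inner ℝ (W ω) (v ω) : ℝ) - V * (inner ℝ (W ω) (γ t ω) : ℝ) := by
      intro ω; rw [inner_sub_right]; ring
    simp only [this]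
    exact ((hWv_int.const_mul V).sub (hWγ_int.const_mul V))
  have hF2_int : Integrable (fun ω => ∑ i, Q t ω i * ((inner ℝ (a i) (x t ω) : ℝ) - b i)) μ :=
    integrable_finset_sum _ (fun i _ => hQx_int i)
  have hG2_int : Integrable (fun ω => ∑ i, Q t ω i * ((inner ℝ (a i) (v ω) : ℝ) - b i)) μ :=
    integrable_finset_sum _ (fun i _ => hQv_int i)
  -- pointwise inequality from hopt
  have hptwise : ∀ᵐ ω ∂μ,
      V * (inner ℝ (W ω) (x t ω - γ t ω) : ℝ) + ∑ i, Q t ω i * ((inner ℝ (a i) (x t ω) : ℝ) - b i)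
        ≤ V * (inner ℝ (W ω) (v ω - γ t ω) : ℝ) + ∑ i, Q t ω i * ((inner ℝ (a i) (v ω) : ℝ) - b i) := by
    filter_upwards [hopt] with ω h
    have e1 : V * (inner ℝ (W ω) (x t ω - γ t ω) : ℝ)
        = V * (inner ℝ (W ω) (x t ω) : ℝ) - V * (inner ℝ (W ω) (γ t ω) : ℝ) := by
      rw [inner_sub_right]; ring
    have e2 : (∑ i, Q t ω i * ((inner ℝ (a i) (x t ω) : ℝ) - b i))
        = (∑ i, Q t ω i * (inner ℝ (a i) (x t ω) : ℝ)) - ∑ i, Q t ω i * b i := by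
      rw [← Finset.sum_sub_distrib]
      exact Finset.sum_congr rfl fun i _ => by ring
    have e3 : V * (inner ℝ (W ω) (v ω - γ t ω) : ℝ)
        = V * (inner ℝ (W ω) (v ω) : ℝ) - V * (inner ℝ (W ω) (γ t ω) : ℝ) := by
      rw [inner_sub_right]; ring
    have e4 : (∑ i, Q t ω i * ((inner ℝ (a i) (v ω) : ℝ) - b i))
        = (∑ i, Q t ω i * (inner ℝ (a i) (v ω) : ℝ)) - ∑ i, Q t ω i * b i := by
      rw [← Finset.sum_sub_distrib]
      exact Finset.sum_congr rfl fun i _ => by ring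
    rw [e1, e2, e3, e4]
    linarith
  -- the G1 bound via convexity
  have hfγ_int : Integrable (fun ω => f (γ t ω)) μ :=
    hbint _ (hfcont.measurable.comp hγtm) ⟨K, fun ω => hK _ (hγB t ω)⟩
  have hG1le : ∫ ω, V * (inner ℝ (W ω) (v ω - γ t ω) : ℝ) ∂μ
      ≤ V * (f γbar - ∫ ω, f (γ t ω) ∂μ) := by
    have e3 : ∀ ω, V * (inner ℝ (W ω) (v ω - γ t ω) : ℝ)
        = V * ((inner ℝ (W ω) (v ω) : ℝ) - (inner ℝ (W ω) (γ t ω) : ℝ)) := by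
      intro ω; rw [inner_sub_right]
    simp only [e3]
    rw [integral_const_mul, integral_sub hWv_int hWγ_int, hEinner]
    have step : (∫ ω, (inner ℝ (W ω) γbar : ℝ) ∂μ) - ∫ ω, (inner ℝ (W ω) (γ t ω) : ℝ) ∂μ
        ≤ f γbar - ∫ ω, f (γ t ω) ∂μ := by
      rw [← integral_sub hWγbar_int hWγ_int]
      have : (∫ ω, ((inner ℝ (W ω) γbar : ℝ) - (inner ℝ (W ω) (γ t ω) : ℝ)) ∂μ)
          ≤ ∫ ω, (f γbar - f (γ t ω)) ∂μ := by
        apply integral_mono (hWγbar_int.sub hWγ_int) ((integrable_const _).sub hfγ_int)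
        intro ω
        have := grad_convex_ineq hconv (hγB t ω) hγbarB (hgrad (γ t ω))
        rw [inner_sub_right] at this
        simpa using this
      refine le_trans this ?_
      rw [integral_sub (integrable_const _) hfγ_int]
      simp
    exact mul_le_mul_of_nonneg_left step hV.le
  -- conclude
  calc (∫ ω, V * (inner ℝ (W ω) (x t ω - γ t ω) : ℝ) ∂μ)
        + (∫ ω, ∑ i, Q t ω i * ((inner ℝ (a i) (x t ω) : ℝ) - b i) ∂μ)
      = ∫ ω, (V * (inner ℝ (W ω) (x t ω - γ t ω) : ℝ)
          + ∑ i, Q t ω i * ((inner ℝ (a i) (x t ω) : ℝ) - b i)) ∂μ :=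
        (integral_add hF1_int hF2_int).symm
    _ ≤ ∫ ω, (V * (inner ℝ (W ω) (v ω - γ t ω) : ℝ)
          + ∑ i, Q t ω i * ((inner ℝ (a i) (v ω) : ℝ) - b i)) ∂μ :=
        integral_mono_ae (hF1_int.add hF2_int) (hG1_int.add hG2_int) hptwise
    _ = (∫ ω, V * (inner ℝ (W ω) (v ω - γ t ω) : ℝ) ∂μ)
          + ∫ ω, ∑ i, Q t ω i * ((inner ℝ (a i) (v ω) : ℝ) - b i) ∂μ :=
        integral_add hG1_int hG2_int
    _ ≤ V * (f γbar - ∫ ω, f (γ t ω) ∂μ) + 0 := add_le_add hG1le hG2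
    _ = V * (f γbar - ∫ ω, f (γ t ω) ∂μ) := add_zero _
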